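/- Let V : [0,∞) → ℝ be continuous and define W(t) = min_{s∈[0,t]} V(s). Let t > 0 be such that both V and W are differentiable at t and W′(t) < 0. Then W(t) = V(t) and W′(t) = V′(t). -/

import Mathlib

/-- **Lemma 3.3 (iii).** If the running minimum `W(t) = min_{[0,t]} V` of a
continuous function `V` is differentiable at `t > 0` with `W′(t) < 0`, then
`W(t) = V(t)` and `W′(t) = V′(t)`. -/
theorem running_min_strict_decrease
    (V : ℝ → ℝ) (hV : ContinuousOn V (Set.Ici 0))
    (W : ℝ → ℝ) (hW : ∀ t ≥ (0:ℝ), W t = sInf (V '' Set.Icc 0 t))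
    (t : ℝ) (ht : 0 < t)
    (hVd : DifferentiableAt ℝ V t) (hWd : DifferentiableAt ℝ W t)
    (hW' : deriv W t < 0) :
    W t = V t ∧ deriv W t = deriv V t := by
  have hIci : Set.Ici (0:ℝ) ∈ nhds t := Ici_mem_nhds ht
  have hbdd : ∀ s : ℝ, 0 ≤ s → BddBelow (V '' Set.Icc 0 s) := fun s hs =>
    ((isCompact_Icc.image_of_continuousOn
      (hV.mono (Set.Icc_subset_Ici_self)))).bddBelow
  have hWleV : ∀ s : ℝ, 0 ≤ s → W s ≤ V s := by
    intro s hs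
    rw [hW s hs]
    exact csInf_le (hbdd s hs) ⟨s, ⟨hs, le_refl s⟩, rfl⟩
  have hWlow : ∀ u : ℝ, 0 ≤ u → u ≤ t → W t ≤ V u := by
    intro u hu hut
    rw [hW t ht.le]
    exact csInf_le (hbdd t ht.le) ⟨u, ⟨hu, hut⟩, rfl⟩
  have hWV : W t = V t := by
    by_contra hne'
    have hlt : W t < V t := lt_of_le_of_ne (hWleV t ht.le) hne'
    have hVt : ContinuousAt V t := (hV t ht.le).continuousAt hIci
    have hev : ∀ᶠ s in nhds t, W t < V s := hVt (Ioi_mem_nhds hlt)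
    rw [Metric.eventually_nhds_iff] at hev
    obtain ⟨δ, hδ, hδV⟩ := hev
    -- for s ∈ (t, t+δ), W t ≤ W s
    have hge : ∀ s, t < s → s < t + δ → W t ≤ W s := by
      intro s hts hsδ
      rw [hW s (le_trans ht.le (le_of_lt hts))]
      refine le_csInf ⟨V s, ⟨s, ⟨le_trans ht.le hts.le, le_refl s⟩, rfl⟩⟩ ?_
      rintro x ⟨u, ⟨hu0, hus⟩, rfl⟩
      rcases le_or_gt u t with h | h
      · exact hWlow u hu0 h
      · refine le_of_lt (hδV ?_)
        rw [Real.dist_eq, abs_of_nonneg (by linarith)]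
        linarith
    -- derivative contradiction
    have hslope := hWd.hasDerivAt
    rw [hasDerivAt_iff_tendsto_slope] at hslope
    have hneg : slope W t ⁻¹' Set.Iio 0 ∈ nhdsWithin t {t}ᶜ :=
      hslope (Iio_mem_nhds hW')
    have hmem : slope W t ⁻¹' Set.Iio 0 ∈ nhdsWithin t (Set.Ioi t) :=
      nhdsWithin_mono t (fun x (hx : t < x) => ne_of_gt hx) hneg
    have hIoo : Set.Ioo t (t + δ) ∈ nhdsWithin t (Set.Ioi t) :=
      Ioo_mem_nhdsGT_of_mem ⟨le_refl t, by linarith⟩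
    obtain ⟨s, hs1, hs2⟩ := Filter.nonempty_of_mem (Filter.inter_mem hmem hIoo)
    have hts : t < s := hs2.1
    have hWts : W t ≤ W s := hge s hs2.1 hs2.2
    have : (0:ℝ) ≤ slope W t s := by
      rw [slope_def_field]
      apply div_nonneg (by linarith) (by linarith)
    exact absurd hs1 (not_lt.mpr this)
  refine ⟨hWV, ?_⟩
  have hmin : IsLocalMin (fun s => V s - W s) t := by
    filter_upwards [hIci] with s hs
    have := hWleV s hs
    simp only [hWV]
    linarith
  have h0 := hmin.deriv_eq_zero
  rw [deriv_fun_sub hVd hWd] at h0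
  linarith
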